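/- Let W ∈ ℂ[z₁,…,z_N] be a nondegenerate quasi-homogeneous polynomial of type (q₁,…,q_N) with all weights qᵢ ≤ 1/2. Then for every constant C > 0 one has |∇W(z)|² − C·|∇²W(z)| → ∞ as ‖z‖ → ∞ in ℂ^N; that is, for every C > 0 and every K ∈ ℝ there is R > 0 such that ‖z‖ ≥ R implies Σᵢ|∂W/∂zᵢ(z)|² − C·Σ_{i,j}|∂²W/∂zᵢ∂z_j(z)| ≥ K. (Strong tameness of the hypersurface section-bundle system (ℂ^N, W) with the standard flat metric.) -/

import Mathlib

open MvPolynomial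


private lemma eval_scale_aux {N : ℕ} (k : Fin N → ℕ) (p : MvPolynomial (Fin N) ℂ) (e : ℕ)
    (hp : ∀ m ∈ p.support, ∑ i, m i * k i = e) (t : ℂ) (v : Fin N → ℂ) :
    eval (fun i => t ^ k i * v i) p = t ^ e * eval v p := by
  rw [eval_eq', eval_eq', Finset.mul_sum]
  refine Finset.sum_congr rfl fun m hm => ?_
  have h1 : ∀ i : Fin N, (t ^ k i * v i) ^ m i = t ^ (m i * k i) * v i ^ m i := by
    intro i; rw [mul_pow, ← pow_mul, mul_comm (k i) (m i)]
  rw [Finset.prod_congr rfl fun i _ => h1 i, Finset.prod_mul_distrib,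
    Finset.prod_pow_eq_pow_sum, hp m hm]
  ring

private lemma wh_of_hom {N : ℕ} (k : Fin N → ℕ) (d : ℕ) (W : MvPolynomial (Fin N) ℂ)
    (hhom : ∀ (lam : ℂ) (z : Fin N → ℂ),
      eval (fun i => lam ^ (k i) * z i) W = lam ^ d * eval z W) :
    ∀ m ∈ W.support, ∑ i, m i * k i = d := by
  intro m0 hm0
  have key : ∀ lam : ℂ,
      (∑ m ∈ W.support, monomial m (lam ^ (∑ i, m i * k i) * coeff m W))
        = C (lam ^ d) * W := by
    intro lam
    apply MvPolynomial.funext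
    intro x
    rw [eval_mul, eval_C, ← hhom lam x, eval_eq' (fun i => lam ^ k i * x i) W, map_sum]
    refine Finset.sum_congr rfl fun m hm => ?_
    rw [eval_monomial, Finsupp.prod_fintype _ _ (fun i => pow_zero (x i))]
    have h1 : ∀ i : Fin N, (lam ^ k i * x i) ^ m i = lam ^ (m i * k i) * x i ^ m i := by
      intro i; rw [mul_pow, ← pow_mul, mul_comm (k i) (m i)]
    rw [Finset.prod_congr rfl fun i _ => h1 i, Finset.prod_mul_distrib,
      Finset.prod_pow_eq_pow_sum]
    ring
  have h2 : ∀ lam : ℂ, lam ^ (∑ i, m0 i * k i) * coeff m0 W = lam ^ d * coeff m0 W := by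
    intro lam
    have := congrArg (coeff m0) (key lam)
    rwa [coeff_sum, coeff_C_mul, Finset.sum_eq_single m0
      (fun m _ hne => by rw [coeff_monomial, if_neg hne])
      (fun h => absurd hm0 h), coeff_monomial, if_pos rfl] at this
  have hc : coeff m0 W ≠ 0 := mem_support_iff.mp hm0
  have h3 : (2 : ℂ) ^ (∑ i, m0 i * k i) = (2 : ℂ) ^ d := mul_right_cancel₀ hc (h2 2)
  have h4 : (2 : ℕ) ^ (∑ i, m0 i * k i) = (2 : ℕ) ^ d := by exact_mod_cast h3
  exact Nat.pow_right_injective (le_refl 2) h4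

private lemma wh_pderiv {N : ℕ} (k : Fin N → ℕ) (e : ℕ) (p : MvPolynomial (Fin N) ℂ) (i : Fin N)
    (hp : ∀ m ∈ p.support, ∑ j, m j * k j = e) :
    ∀ m ∈ (pderiv i p).support, (∑ j, m j * k j) + k i = e := by
  intro m' hm'
  have hrep : pderiv i p
      = ∑ m ∈ p.support, monomial (m - Finsupp.single i 1) (coeff m p * (m i : ℂ)) := by
    conv_lhs => rw [← support_sum_monomial_coeff p]
    rw [map_sum]
    exact Finset.sum_congr rfl fun m _ => pderiv_monomial
  rw [mem_support_iff, hrep, coeff_sum] at hm'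
  obtain ⟨m, hm, hne⟩ := Finset.exists_ne_zero_of_sum_ne_zero hm'
  rw [coeff_monomial] at hne
  by_cases h : m - Finsupp.single i 1 = m'
  · rw [if_pos h] at hne
    have hmi : m i ≠ 0 := by
      intro h0
      apply hne
      rw [h0]; simp
    obtain ⟨n, hn⟩ : ∃ n, m i = n + 1 := ⟨m i - 1, by omega⟩
    subst h
    have hsum := hp m hm
    rw [← hsum, ← Finset.add_sum_erase _ _ (Finset.mem_univ i),
      ← Finset.add_sum_erase _ (fun j => m j * k j) (Finset.mem_univ i)]
    have h5 : ∀ j ∈ Finset.univ.erase i,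
        ((m - Finsupp.single i 1 : Fin N →₀ ℕ)) j * k j = m j * k j := by
      intro j hj
      rw [Finsupp.tsub_apply, Finsupp.single_eq_of_ne (Finset.ne_of_mem_erase hj),
        Nat.sub_zero]
    rw [Finset.sum_congr rfl h5, Finsupp.tsub_apply, Finsupp.single_eq_same, hn,
      Nat.add_sub_cancel]
    ring
  · rw [if_neg h] at hne; exact absurd rfl hne

set_option maxHeartbeats 1000000 in
/-- **Strong tameness of the hypersurface section-bundle system `(ℂ^N, W)`.**
If `W` is a nondegenerate quasi-homogeneous polynomial of type `(q₁,…,q_N)` with all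
weights `qᵢ ≤ 1/2`, then for every `C > 0` one has
`|∇W(z)|² − C·|∇²W(z)| → ∞` as `‖z‖ → ∞` in `ℂ^N`. -/
theorem strong_tameness_quasihomogeneous
    (N : ℕ) (hN : 1 ≤ N) (W : MvPolynomial (Fin N) ℂ)
    (q : Fin N → ℚ) (k : Fin N → ℕ) (d : ℕ)
    (hk : ∀ i, 0 < k i) (hd : 0 < d)
    (hq : ∀ i, q i = (k i : ℚ) / (d : ℚ))
    (hq0 : ∀ i, 0 < q i) (hq1 : ∀ i, q i < 1)
    (hhom : ∀ (lam : ℂ) (z : Fin N → ℂ),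
      eval (fun i => lam ^ (k i) * z i) W = lam ^ d * eval z W)
    (hnd : ∀ z : Fin N → ℂ, (∀ i, eval z (pderiv i W) = 0) → z = 0)
    (hhalf : ∀ i, q i ≤ 1 / 2) :
    ∀ C : ℝ, 0 < C → ∀ K : ℝ, ∃ R : ℝ, 0 < R ∧
      ∀ z : EuclideanSpace ℂ (Fin N), R ≤ ‖z‖ →
        K ≤ (∑ i, ‖eval (z : Fin N → ℂ) (pderiv i W)‖ ^ 2)
            - C * ∑ i, ∑ j, ‖eval (z : Fin N → ℂ) (pderiv i (pderiv j W))‖ := by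
  classical
  intro C hC K
  -- arithmetic facts about the weights
  have hkd : ∀ i, 2 * k i ≤ d := by
    intro i
    have h := hhalf i
    rw [hq i, div_le_div_iff₀ (by exact_mod_cast hd) (by norm_num)] at h
    have h2 : ((2 * k i : ℕ) : ℚ) ≤ (d : ℚ) := by push_cast; linarith
    exact_mod_cast h2
  have hd2 : 2 ≤ d := by
    have h1 := hk ⟨0, hN⟩
    have h2 := hkd ⟨0, hN⟩
    omega
  -- weighted homogeneity of W and its derivatives
  have hW : ∀ m ∈ W.support, ∑ i, m i * k i = d := wh_of_hom k d W hhom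
  have hW1 : ∀ i, ∀ m ∈ (pderiv i W).support, ∑ j, m j * k j = d - k i := by
    intro i m hm
    have := wh_pderiv k d W i hW m hm
    omega
  have hW2 : ∀ i j, ∀ m ∈ (pderiv i (pderiv j W)).support,
      ∑ l, m l * k l = d - k j - k i := by
    intro i j m hm
    have := wh_pderiv k (d - k j) (pderiv j W) i (hW1 j) m hm
    omega
  -- scaling of the norms of derivatives
  have hscale1 : ∀ (i : Fin N) (t : ℝ), 0 ≤ t → ∀ v : Fin N → ℂ,
      ‖eval (fun l => (t : ℂ) ^ k l * v l) (pderiv i W)‖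
        = t ^ (d - k i) * ‖eval v (pderiv i W)‖ := by
    intro i t ht v
    rw [eval_scale_aux k _ (d - k i) (hW1 i), norm_mul, norm_pow, Complex.norm_real,
      Real.norm_of_nonneg ht]
  have hscale2 : ∀ (i j : Fin N) (t : ℝ), 0 ≤ t → ∀ v : Fin N → ℂ,
      ‖eval (fun l => (t : ℂ) ^ k l * v l) (pderiv i (pderiv j W))‖
        = t ^ (d - k j - k i) * ‖eval v (pderiv i (pderiv j W))‖ := by
    intro i j t ht v
    rw [eval_scale_aux k _ (d - k j - k i) (hW2 i j), norm_mul, norm_pow, Complex.norm_real,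
      Real.norm_of_nonneg ht]
  -- the weighted "sphere"
  set c : Fin N → ℕ := fun i => 2 * ∏ j ∈ Finset.univ.erase i, k j with hc
  have hcpos : ∀ i, 0 < c i := fun i =>
    Nat.mul_pos two_pos (Finset.prod_pos fun j _ => hk j)
  set L : ℕ := ∏ j, k j with hL
  have hLpos : 0 < L := Finset.prod_pos fun j _ => hk j
  have hkc : ∀ i, k i * c i = 2 * L := by
    intro i
    calc k i * c i = 2 * (k i * ∏ j ∈ Finset.univ.erase i, k j) := by rw [hc]; ring
      _ = 2 * L := by rw [Finset.mul_prod_erase _ _ (Finset.mem_univ i), hL]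
  clear_value c L
  set ρ : EuclideanSpace ℂ (Fin N) → ℝ := fun z => ∑ i, ‖(z : Fin N → ℂ) i‖ ^ c i with hρ
  have hcoe : Continuous fun z : EuclideanSpace ℂ (Fin N) => (z : Fin N → ℂ) :=
    PiLp.continuous_ofLp 2 (fun _ : Fin N => ℂ)
  have hρcont : Continuous ρ := by
    rw [hρ]
    exact continuous_finset_sum _ fun i _ => (((continuous_apply i).comp hcoe).norm.pow (c i))
  set S : Set (EuclideanSpace ℂ (Fin N)) := {u | ρ u = 1} with hSdef
  have hSclosed : IsClosed S := isClosed_eq hρcont continuous_const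
  have hu_le_one : ∀ u ∈ S, ∀ i, ‖(u : Fin N → ℂ) i‖ ≤ 1 := by
    intro u hu i
    rw [hSdef] at hu
    have hu' : (∑ j, ‖(u : Fin N → ℂ) j‖ ^ c j) = 1 := by
      simpa only [hρ, Set.mem_setOf_eq] using hu
    have hterm : ‖(u : Fin N → ℂ) i‖ ^ c i ≤ 1 := by
      have h1 : ‖(u : Fin N → ℂ) i‖ ^ c i ≤ ∑ j, ‖(u : Fin N → ℂ) j‖ ^ c j :=
        Finset.single_le_sum (f := fun j => ‖(u : Fin N → ℂ) j‖ ^ c j)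
          (fun j _ => by positivity) (Finset.mem_univ i)
      rwa [hu'] at h1
    exact (pow_le_one_iff_of_nonneg (norm_nonneg _) (hcpos i).ne').mp hterm
  have hSbdd : Bornology.IsBounded S := by
    apply (Metric.isBounded_closedBall
      (x := (0 : EuclideanSpace ℂ (Fin N))) (r := Real.sqrt N)).subset
    intro u hu
    rw [Metric.mem_closedBall, dist_zero_right, EuclideanSpace.norm_eq]
    apply Real.sqrt_le_sqrt
    calc ∑ i, ‖(u : Fin N → ℂ) i‖ ^ 2 ≤ ∑ _i : Fin N, (1 : ℝ) :=
          Finset.sum_le_sum fun i _ =>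
            pow_le_one₀ (norm_nonneg _) (hu_le_one u hu i)
      _ = N := by simp
  have hScompact : IsCompact S := Metric.isCompact_of_isClosed_isBounded hSclosed hSbdd
  have hSne : S.Nonempty := by
    refine ⟨EuclideanSpace.single ⟨0, hN⟩ 1, ?_⟩
    rw [hSdef]
    show ρ _ = 1
    simp only [hρ]
    rw [Finset.sum_eq_single (⟨0, hN⟩ : Fin N)]
    · rw [EuclideanSpace.single_apply, if_pos rfl, norm_one, one_pow]
    · intro j _ hj
      rw [EuclideanSpace.single_apply, if_neg hj, norm_zero, zero_pow (hcpos j).ne']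
    · intro habs; exact absurd (Finset.mem_univ _) habs
  clear_value ρ S
  -- the functions f and g
  set f : EuclideanSpace ℂ (Fin N) → ℝ :=
    fun z => ∑ i, ‖eval (z : Fin N → ℂ) (pderiv i W)‖ ^ 2 with hf
  set g : EuclideanSpace ℂ (Fin N) → ℝ :=
    fun z => ∑ i, ∑ j, ‖eval (z : Fin N → ℂ) (pderiv i (pderiv j W))‖ with hg
  have hfcont : Continuous f := by
    rw [hf]
    exact continuous_finset_sum _ fun i _ =>
      (((MvPolynomial.continuous_eval _).comp hcoe).norm.pow 2)
  have hgcont : Continuous g := by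
    rw [hg]
    exact continuous_finset_sum _ fun i _ =>
      continuous_finset_sum _ fun j _ =>
        ((MvPolynomial.continuous_eval _).comp hcoe).norm
  obtain ⟨umin, huminS, hmin⟩ := hScompact.exists_isMinOn hSne hfcont.continuousOn
  obtain ⟨umax, humaxS, hmax⟩ := hScompact.exists_isMaxOn hSne hgcont.continuousOn
  set m : ℝ := f umin with hm
  set M : ℝ := g umax with hM
  have hm_pos : 0 < m := by
    rcases lt_or_eq_of_le (Finset.sum_nonneg (s := Finset.univ)
      (f := fun i => ‖eval (umin : Fin N → ℂ) (pderiv i W)‖ ^ 2)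
      (fun i _ => by positivity)) with h | h
    · exact h
    · exfalso
      have hzero : ∀ i, eval (umin : Fin N → ℂ) (pderiv i W) = 0 := by
        intro i
        have := (Finset.sum_eq_zero_iff_of_nonneg
          (fun i _ => by positivity : ∀ i ∈ Finset.univ,
            (0:ℝ) ≤ ‖eval (umin : Fin N → ℂ) (pderiv i W)‖ ^ 2)).mp h.symm i (Finset.mem_univ i)
        have hnn : ‖eval (umin : Fin N → ℂ) (pderiv i W)‖ = 0 := by
          nlinarith [norm_nonneg (eval (umin : Fin N → ℂ) (pderiv i W))]
        exact norm_eq_zero.mp hnn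
      have h0 := hnd (umin : Fin N → ℂ) hzero
      have hρ0 : ρ umin = 0 := by
        simp only [hρ]
        apply Finset.sum_eq_zero
        intro i _
        rw [show (umin : Fin N → ℂ) i = 0 from congrFun h0 i, norm_zero,
          zero_pow (hcpos i).ne']
      have huminS' : ρ umin = 1 := by rw [hSdef] at huminS; exact huminS
      rw [huminS'] at hρ0
      exact one_ne_zero hρ0
  have hM0 : 0 ≤ M := by
    rw [hM, hg]
    exact Finset.sum_nonneg fun i _ => Finset.sum_nonneg fun j _ => norm_nonneg _
  -- choice of the threshold T and radius R
  set T : ℝ := max 1 (Real.sqrt ((C * M + |K| + 1) / m)) with hT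
  have hT1 : (1 : ℝ) ≤ T := le_max_left _ _
  have hTsq : C * M + |K| + 1 ≤ T ^ 2 * m := by
    have h0 : (0:ℝ) ≤ (C * M + |K| + 1) / m := by positivity
    have h1 : Real.sqrt ((C * M + |K| + 1) / m) ^ 2 = (C * M + |K| + 1) / m :=
      Real.sq_sqrt h0
    have h2 : Real.sqrt ((C * M + |K| + 1) / m) ≤ T := le_max_right _ _
    have h3 : Real.sqrt ((C * M + |K| + 1) / m) ^ 2 ≤ T ^ 2 := by
      nlinarith [Real.sqrt_nonneg ((C * M + |K| + 1) / m)]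
    rw [h1] at h3
    rw [div_le_iff₀ hm_pos] at h3
    linarith
  clear_value f g m M T
  refine ⟨Real.sqrt (∑ i, T ^ (2 * k i)) + 1,
    by have := Real.sqrt_nonneg (∑ i, T ^ (2 * k i)); linarith, ?_⟩
  intro z hz
  have hρz : 0 < ρ z := by
    simp only [hρ]
    rcases (lt_or_eq_of_le (Finset.sum_nonneg (s := Finset.univ)
      (f := fun i => ‖(z : Fin N → ℂ) i‖ ^ c i) (fun i _ => by positivity))) with h | h
    · exact h
    · exfalso
      have hz0 : z = 0 := by
        ext i
        have := (Finset.sum_eq_zero_iff_of_nonneg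
          (fun i _ => by positivity : ∀ i ∈ Finset.univ,
            (0:ℝ) ≤ ‖(z : Fin N → ℂ) i‖ ^ c i)).mp h.symm i (Finset.mem_univ i)
        have h2 : ‖(z : Fin N → ℂ) i‖ = 0 :=
          (pow_eq_zero_iff (hcpos i).ne').mp this
        exact norm_eq_zero.mp h2
      rw [hz0, norm_zero] at hz
      have := Real.sqrt_nonneg (∑ i, T ^ (2 * k i))
      linarith
  set t : ℝ := (ρ z) ^ ((2 * (L:ℝ)))⁻¹ with ht_def
  have ht0 : 0 < t := Real.rpow_pos_of_pos hρz _
  have ht2L : t ^ (2 * L) = ρ z := by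
    have hne : (2 * (L:ℝ)) ≠ 0 := by positivity
    rw [ht_def, ← Real.rpow_natCast ((ρ z) ^ ((2 * (L:ℝ)))⁻¹) (2 * L),
      ← Real.rpow_mul hρz.le]
    rw [show ((2 * L : ℕ) : ℝ) = 2 * (L:ℝ) by push_cast; ring]
    rw [inv_mul_cancel₀ hne, Real.rpow_one]
  set u : EuclideanSpace ℂ (Fin N) :=
    WithLp.toLp 2 (fun i => ((t : ℂ) ^ k i)⁻¹ * (z : Fin N → ℂ) i : Fin N → ℂ) with hu
  have htC : ∀ i : Fin N, ((t : ℂ) ^ k i) ≠ 0 := fun i =>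
    pow_ne_zero _ (by exact_mod_cast ht0.ne')
  have hzu : (z : Fin N → ℂ) = fun i => (t : ℂ) ^ k i * (u : Fin N → ℂ) i := by
    funext i
    show (z : Fin N → ℂ) i = (t : ℂ) ^ k i * (((t : ℂ) ^ k i)⁻¹ * (z : Fin N → ℂ) i)
    rw [← mul_assoc, mul_inv_cancel₀ (htC i), one_mul]
  have hnu : ∀ i, ‖(u : Fin N → ℂ) i‖ = ‖(z : Fin N → ℂ) i‖ / t ^ k i := by
    intro i
    rw [hu]
    show ‖((t : ℂ) ^ k i)⁻¹ * (z : Fin N → ℂ) i‖ = _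
    rw [norm_mul, norm_inv, norm_pow, Complex.norm_real, Real.norm_of_nonneg ht0.le,
      div_eq_inv_mul]
  have huS : u ∈ S := by
    rw [hSdef]
    show ρ u = 1
    simp only [hρ]
    have hterm : ∀ i : Fin N, ‖(u : Fin N → ℂ) i‖ ^ c i = ‖(z : Fin N → ℂ) i‖ ^ c i / ρ z := by
      intro i
      rw [hnu i, div_pow, ← pow_mul, hkc i, ht2L]
    rw [Finset.sum_congr rfl fun i _ => hterm i, ← Finset.sum_div]
    have hρz' : (0:ℝ) < ∑ i, ‖(z : Fin N → ℂ) i‖ ^ c i := by simpa only [hρ] using hρz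
    simp only [hρ]
    exact div_self hρz'.ne'
  clear_value t u
  -- ‖z‖ large forces t large
  have htT : T < t := by
    by_contra hle
    push_neg at hle
    have hznorm : ‖z‖ ≤ Real.sqrt (∑ i, T ^ (2 * k i)) := by
      rw [EuclideanSpace.norm_eq]
      apply Real.sqrt_le_sqrt
      apply Finset.sum_le_sum
      intro i _
      have h1 : ‖(z : Fin N → ℂ) i‖ = t ^ k i * ‖(u : Fin N → ℂ) i‖ := by
        rw [hnu i]
        field_simp
      have hui : ‖(u : Fin N → ℂ) i‖ ≤ 1 := hu_le_one u huS i
      have h2 : t ^ k i ≤ T ^ k i := pow_le_pow_left₀ ht0.le hle _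
      calc ‖(z : Fin N → ℂ) i‖ ^ 2 = (t ^ k i) ^ 2 * ‖(u : Fin N → ℂ) i‖ ^ 2 := by
            rw [h1]; ring
        _ ≤ (T ^ k i) ^ 2 * 1 := by
            apply mul_le_mul
            · exact pow_le_pow_left₀ (by positivity) h2 2
            · exact pow_le_one₀ (norm_nonneg _) hui
            · positivity
            · positivity
        _ = T ^ (2 * k i) := by rw [mul_one, ← pow_mul, mul_comm]
    linarith
  have ht1 : 1 ≤ t := le_trans hT1 htT.le
  -- main estimates
  have hfz : t ^ d * f u ≤ f z := by
    have hfz_eq : f z = ∑ i, (t ^ (d - k i) * ‖eval (u : Fin N → ℂ) (pderiv i W)‖) ^ 2 := by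
      rw [hf]
      exact Finset.sum_congr rfl fun i _ => by rw [hzu, hscale1 i t ht0.le]
    rw [hfz_eq, hf, Finset.mul_sum]
    apply Finset.sum_le_sum
    intro i _
    have hexp : d ≤ 2 * (d - k i) := by have := hkd i; omega
    have h1 : t ^ d ≤ (t ^ (d - k i)) ^ 2 := by
      rw [← pow_mul, mul_comm]
      exact pow_le_pow_right₀ ht1 hexp
    calc t ^ d * ‖eval (u : Fin N → ℂ) (pderiv i W)‖ ^ 2
        ≤ (t ^ (d - k i)) ^ 2 * ‖eval (u : Fin N → ℂ) (pderiv i W)‖ ^ 2 := by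
          apply mul_le_mul_of_nonneg_right h1 (by positivity)
      _ = (t ^ (d - k i) * ‖eval (u : Fin N → ℂ) (pderiv i W)‖) ^ 2 := by ring
  have hgz : g z ≤ t ^ (d - 2) * g u := by
    have hgz_eq : g z = ∑ i, ∑ j,
        t ^ (d - k j - k i) * ‖eval (u : Fin N → ℂ) (pderiv i (pderiv j W))‖ := by
      rw [hg]
      exact Finset.sum_congr rfl fun i _ =>
        Finset.sum_congr rfl fun j _ => by rw [hzu, hscale2 i j t ht0.le]
    rw [hgz_eq, hg, Finset.mul_sum]
    apply Finset.sum_le_sum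
    intro i _
    rw [Finset.mul_sum]
    apply Finset.sum_le_sum
    intro j _
    apply mul_le_mul_of_nonneg_right _ (norm_nonneg _)
    apply pow_le_pow_right₀ ht1
    have hi := hk i; have hj := hk j
    omega
  have hfu : m ≤ f u := by rw [hm]; exact isMinOn_iff.mp hmin u huS
  have hgu : g u ≤ M := by rw [hM]; exact isMaxOn_iff.mp hmax u huS
  -- put everything together
  have h1 : t ^ d * m ≤ f z :=
    le_trans (mul_le_mul_of_nonneg_left hfu (by positivity)) hfz
  have h2 : C * g z ≤ C * (t ^ (d - 2) * M) := by
    apply mul_le_mul_of_nonneg_left _ hC.le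
    exact le_trans hgz (mul_le_mul_of_nonneg_left hgu (by positivity))
  have h3 : t ^ d = t ^ (d - 2) * t ^ 2 := by
    rw [← pow_add]
    congr 1
    omega
  have h4 : (1:ℝ) ≤ t ^ (d - 2) := one_le_pow₀ ht1
  have h5 : |K| + 1 ≤ t ^ 2 * m - C * M := by
    have ht2 : T ^ 2 ≤ t ^ 2 := pow_le_pow_left₀ (by linarith) htT.le 2
    nlinarith
  have h6 : |K| + 1 ≤ t ^ (d - 2) * (t ^ 2 * m - C * M) := by
    have hX0 : (0:ℝ) ≤ t ^ 2 * m - C * M := by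
      have : (0:ℝ) ≤ |K| + 1 := by positivity
      linarith
    calc |K| + 1 ≤ t ^ 2 * m - C * M := h5
      _ = 1 * (t ^ 2 * m - C * M) := (one_mul _).symm
      _ ≤ t ^ (d - 2) * (t ^ 2 * m - C * M) := mul_le_mul_of_nonneg_right h4 hX0
  have h7 : (t ^ (d - 2) * t ^ 2) * m - C * (t ^ (d - 2) * M)
      = t ^ (d - 2) * (t ^ 2 * m - C * M) := by ring
  have hfinal : K ≤ f z - C * g z := by
    rw [h3] at h1
    have hK : K ≤ |K| := le_abs_self K
    linarith [h1, h2, h6, h7]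
  simpa only [hf, hg] using hfinal
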